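/- Gain asymptotics: with G(n) := (n−2)² (8/π²) E[(Σ_{l=1}^n (2l−1)² η_l²)^{−1}] for i.i.d. standard Gaussians η_l, one has G(n) ~ 6/(nπ²) as n → ∞, i.e., n·G(n) → 6/π². -/

import Mathlib

open MeasureTheory ProbabilityTheory Real

open scoped ENNReal NNReal

/-- The gain `G(n) = (n−2)² (8/π²) E[(Σ_{l=1}^n (2l−1)² ηₗ²)⁻¹]` for i.i.d. standard
Gaussians `ηₗ`. -/
noncomputable def steinGain (n : ℕ) : ℝ :=
  ((n : ℝ) - 2) ^ 2 * (8 / π ^ 2) *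
    ∫ x : Fin n → ℝ, (∑ l : Fin n, (2 * (l.val : ℝ) + 1) ^ 2 * (x l) ^ 2)⁻¹
      ∂(Measure.pi fun _ : Fin n => gaussianReal 0 1)


lemma gauss_exp (c : ℝ) (hc : 0 ≤ c) :
    ∫ x, rexp (-(c * x ^ 2)) ∂gaussianReal 0 1 = (Real.sqrt (1 + 2 * c))⁻¹ := by
  rw [gaussianReal_of_var_ne_zero 0 one_ne_zero]
  have h1 : (gaussianPDF 0 1) = fun x => ((Real.toNNReal (gaussianPDFReal 0 1 x) : ℝ≥0) : ℝ≥0∞) := by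
    ext x; rfl
  rw [h1, integral_withDensity_eq_integral_smul
      ((measurable_gaussianPDFReal 0 1).real_toNNReal) _]
  have h2 : ∀ x : ℝ, (Real.toNNReal (gaussianPDFReal 0 1 x)) • rexp (-(c * x ^ 2))
      = (Real.sqrt (2 * π))⁻¹ * rexp (-(c + 1/2) * x ^ 2) := by
    intro x
    rw [NNReal.smul_def, smul_eq_mul, Real.coe_toNNReal _ (gaussianPDFReal_nonneg 0 1 x)]
    simp only [gaussianPDFReal, NNReal.coe_one, mul_one, sub_zero]
    rw [mul_assoc, ← Real.exp_add]
    ring_nf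
  simp_rw [h2]
  rw [integral_const_mul, integral_gaussian]
  have hc2 : (0:ℝ) < c + 1/2 := by linarith
  rw [← Real.sqrt_inv, ← Real.sqrt_mul (by positivity)]
  have : (2 * π)⁻¹ * (π / (c + 1/2)) = (1 + 2*c)⁻¹ := by
    field_simp
    ring
  rw [this, Real.sqrt_inv]

lemma integral_pi_gauss_prod {n : ℕ} (f : Fin n → ℝ → ℝ) :
    ∫ x : Fin n → ℝ, ∏ i, f i (x i) ∂(Measure.pi fun _ : Fin n => gaussianReal 0 1)
      = ∏ i, ∫ x, f i x ∂gaussianReal 0 1 := by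
  letI : MeasureSpace ℝ := ⟨gaussianReal 0 1⟩
  have : SigmaFinite (volume : Measure ℝ) := by
    change SigmaFinite (gaussianReal 0 1); infer_instance
  exact MeasureTheory.integral_fin_nat_prod_eq_prod f

/-- The Laplace-transform factor. -/
noncomputable def steinF (n : ℕ) (t : ℝ) : ℝ :=
  ∏ l : Fin n, (Real.sqrt (1 + 2 * (t * (2 * (l.val : ℝ) + 1) ^ 2)))⁻¹

lemma integral_exp_S (n : ℕ) (t : ℝ) (ht : 0 ≤ t) :
    ∫ x : Fin n → ℝ, rexp (-(t * ∑ l : Fin n, (2 * (l.val : ℝ) + 1) ^ 2 * (x l) ^ 2))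
      ∂(Measure.pi fun _ : Fin n => gaussianReal 0 1) = steinF n t := by
  have h1 : ∀ x : Fin n → ℝ,
      rexp (-(t * ∑ l : Fin n, (2 * (l.val : ℝ) + 1) ^ 2 * (x l) ^ 2))
        = ∏ l : Fin n, rexp (-((t * (2 * (l.val : ℝ) + 1) ^ 2) * (x l) ^ 2)) := by
    intro x
    rw [← Real.exp_sum]
    congr 1
    rw [Finset.mul_sum, ← Finset.sum_neg_distrib]
    exact Finset.sum_congr rfl fun l _ => by ring
  simp_rw [h1]
  rw [integral_pi_gauss_prod (fun l y => rexp (-(t * (2 * (l.val : ℝ) + 1) ^ 2 * y ^ 2)))]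
  exact Finset.prod_congr rfl fun l _ =>
    gauss_exp _ (by positivity)

lemma integral_exp_neg_mul_Ioi' (c : ℝ) (hc : 0 < c) :
    ∫ t in Set.Ioi (0:ℝ), rexp (-(c * t)) = c⁻¹ := by
  have := integral_comp_mul_left_Ioi (fun u => rexp (-u)) 0 hc
  simp only [mul_zero] at this
  rw [this, integral_exp_neg_Ioi_zero, smul_eq_mul, mul_one]

lemma measurable_S (n : ℕ) :
    Measurable (fun x : Fin n → ℝ => ∑ l : Fin n, (2 * (l.val : ℝ) + 1) ^ 2 * (x l) ^ 2) := by
  fun_prop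

lemma S_nonneg (n : ℕ) (x : Fin n → ℝ) :
    0 ≤ ∑ l : Fin n, (2 * (l.val : ℝ) + 1) ^ 2 * (x l) ^ 2 :=
  Finset.sum_nonneg fun l _ => by positivity

lemma ofReal_inv_eq_lintegral (c : ℝ) (hc : 0 < c) :
    ENNReal.ofReal c⁻¹ = ∫⁻ t in Set.Ioi (0:ℝ), ENNReal.ofReal (rexp (-(t * c))) := by
  rw [← integral_exp_neg_mul_Ioi' c hc]
  rw [ofReal_integral_eq_lintegral_ofReal]
  · simp_rw [mul_comm]
  · have := exp_neg_integrableOn_Ioi 0 hc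
    exact this.congr_fun (fun t _ => by simp only [neg_mul]) measurableSet_Ioi
  · exact Filter.Eventually.of_forall fun t => (Real.exp_pos _).le

lemma steinF_nonneg (n : ℕ) (t : ℝ) : 0 ≤ steinF n t :=
  Finset.prod_nonneg fun l _ => by positivity

lemma measurable_steinF (n : ℕ) : Measurable (steinF n) := by
  unfold steinF; fun_prop

lemma repr_integral (n : ℕ) (hn : 1 ≤ n) :
    (∫ x : Fin n → ℝ, (∑ l : Fin n, (2 * (l.val : ℝ) + 1) ^ 2 * (x l) ^ 2)⁻¹
      ∂(Measure.pi fun _ : Fin n => gaussianReal 0 1))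
      = ∫ t in Set.Ioi (0:ℝ), steinF n t := by
  set μ := (Measure.pi fun _ : Fin n => gaussianReal 0 1) with hμ
  set S := fun x : Fin n → ℝ => ∑ l : Fin n, (2 * (l.val : ℝ) + 1) ^ 2 * (x l) ^ 2 with hS
  have hSm : Measurable S := measurable_S n
  -- a.e. positivity
  have hpos : ∀ᵐ x ∂μ, 0 < S x := by
    set i : Fin n := ⟨0, hn⟩
    have h0 : μ {x | x i = 0} = 0 := by
      have : {x : Fin n → ℝ | x i = 0} = (Function.eval i) ⁻¹' {0} := rfl
      rw [this]
      exact Measure.pi_eval_preimage_null _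
        ((gaussianReal_absolutelyContinuous 0 one_ne_zero) (measure_singleton 0))
    rw [Filter.eventually_iff]
    rw [mem_ae_iff]
    refine measure_mono_null (fun x hx => ?_) h0
    simp only [Set.mem_compl_iff, Set.mem_setOf_eq, not_lt] at hx ⊢
    by_contra hxi
    apply absurd hx
    push_neg
    calc (0:ℝ) < (2 * (i.val : ℝ) + 1) ^ 2 * (x i) ^ 2 := by positivity
    _ ≤ S x := Finset.single_le_sum (f := fun l : Fin n => (2 * (l.val : ℝ) + 1) ^ 2 * (x l) ^ 2)
        (fun l _ => by positivity) (Finset.mem_univ i)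
  have key : ∫⁻ x, ENNReal.ofReal ((S x)⁻¹) ∂μ
      = ∫⁻ t in Set.Ioi (0:ℝ), ENNReal.ofReal (steinF n t) := by
    have step1 : ∫⁻ x, ENNReal.ofReal ((S x)⁻¹) ∂μ
        = ∫⁻ x, (∫⁻ t in Set.Ioi (0:ℝ), ENNReal.ofReal (rexp (-(t * S x)))) ∂μ := by
      refine lintegral_congr_ae ?_
      filter_upwards [hpos] with x hx
      exact ofReal_inv_eq_lintegral (S x) hx
    have hfmeas : Measurable (Function.uncurry fun (x : Fin n → ℝ) (t : ℝ) =>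
        ENNReal.ofReal (rexp (-(t * S x)))) := by
      apply ENNReal.measurable_ofReal.comp
      apply Real.measurable_exp.comp
      exact (measurable_snd.mul (hSm.comp measurable_fst)).neg
    rw [step1, lintegral_lintegral_swap hfmeas.aemeasurable]
    refine setLIntegral_congr_fun measurableSet_Ioi ?_
    intro t ht
    beta_reduce
    have ht' : (0:ℝ) ≤ t := (Set.mem_Ioi.mp ht).le
    rw [← integral_exp_S n t ht', ofReal_integral_eq_lintegral_ofReal]
    · refine Integrable.mono' (integrable_const 1) ?_ ?_
      · exact ((Real.measurable_exp.comp ((hSm.const_mul t).neg)).aestronglyMeasurable)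
      · refine Filter.Eventually.of_forall fun x => ?_
        rw [Real.norm_eq_abs, Real.abs_exp]
        exact Real.exp_le_one_iff.mpr (by nlinarith [S_nonneg n x])
    · exact Filter.Eventually.of_forall fun x => (Real.exp_pos _).le
  rw [integral_eq_lintegral_of_nonneg_ae
      (Filter.Eventually.of_forall fun x => inv_nonneg.mpr (S_nonneg n x))
      (hSm.inv.aestronglyMeasurable),
    integral_eq_lintegral_of_nonneg_ae
      (Filter.Eventually.of_forall fun t => steinF_nonneg n t)
      ((measurable_steinF n).aestronglyMeasurable),
    key]

lemma sum_sq_odd (n : ℕ) :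
    ∑ l ∈ Finset.range n, (2 * (l : ℝ) + 1) ^ 2 = (n : ℝ) * (2 * n - 1) * (2 * n + 1) / 3 := by
  induction n with
  | zero => simp
  | succ m ih =>
      rw [Finset.sum_range_succ, ih]
      push_cast
      ring

lemma sum_sq_odd_fin (n : ℕ) :
    ∑ l : Fin n, (2 * (l.val : ℝ) + 1) ^ 2 = (n : ℝ) * (2 * n - 1) * (2 * n + 1) / 3 := by
  rw [← sum_sq_odd n]
  exact Fin.sum_univ_eq_sum_range (fun l => (2 * (l : ℝ) + 1) ^ 2) n

lemma steinF_factor_le_one (c : ℝ) (hc : 0 ≤ c) : (Real.sqrt (1 + c))⁻¹ ≤ 1 := by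
  rw [inv_le_one_iff₀]
  right
  nlinarith [Real.sq_sqrt (by linarith : (0:ℝ) ≤ 1 + c), Real.sqrt_nonneg (1 + c)]

lemma steinF_le_one (n : ℕ) {t : ℝ} (ht : 0 ≤ t) : steinF n t ≤ 1 := by
  refine Finset.prod_le_one (fun l _ => by positivity) (fun l _ => ?_)
  exact steinF_factor_le_one _ (by positivity)

lemma steinF_bound (n : ℕ) (hn : 16 ≤ n) {s : ℝ} (hs : 0 < s) :
    steinF n (((n : ℝ) ^ 3)⁻¹ * s) ≤ 64 / s ^ 2 := by
  have hn0 : (0:ℝ) < n := by exact_mod_cast (show 0 < n by omega)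
  set t := ((n : ℝ) ^ 3)⁻¹ * s with hts
  have ht : 0 < t := by positivity
  set x := 2 * s / n with hxdef
  have hx0 : 0 < x := by positivity
  have hhalf : n / 2 < n := Nat.div_lt_self (by omega) one_lt_two
  set i₀ : Fin n := ⟨n / 2, hhalf⟩ with hi₀
  set k := n - n / 2 with hk
  set m := k / 4 with hm
  have hkey : steinF n t ≤ (Real.sqrt (1 + x))⁻¹ ^ k := by
    have hsub : steinF n t ≤ ∏ l ∈ Finset.Ici i₀,
        (Real.sqrt (1 + 2 * (t * (2 * (l.val : ℝ) + 1) ^ 2)))⁻¹ := by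
      rw [steinF, ← Finset.prod_mul_prod_compl (Finset.Ici i₀)]
      have h1 : ∏ l ∈ (Finset.Ici i₀)ᶜ,
          (Real.sqrt (1 + 2 * (t * (2 * (l.val : ℝ) + 1) ^ 2)))⁻¹ ≤ 1 :=
        Finset.prod_le_one (fun l _ => by positivity)
          (fun l _ => steinF_factor_le_one _ (by positivity))
      have h2 : (0:ℝ) ≤ ∏ l ∈ Finset.Ici i₀,
          (Real.sqrt (1 + 2 * (t * (2 * (l.val : ℝ) + 1) ^ 2)))⁻¹ :=
        Finset.prod_nonneg (fun l _ => by positivity)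
      nlinarith
    refine hsub.trans ?_
    have hstep : ∀ l ∈ Finset.Ici i₀,
        (Real.sqrt (1 + 2 * (t * (2 * (l.val : ℝ) + 1) ^ 2)))⁻¹ ≤ (Real.sqrt (1 + x))⁻¹ := by
      intro l hl
      have hval : n ≤ 2 * l.val + 1 := by
        have := (Finset.mem_Ici.mp hl)
        have : n / 2 ≤ l.val := this
        omega
      have hvalR : (n:ℝ) ≤ 2 * (l.val : ℝ) + 1 := by exact_mod_cast hval
      have harg : x ≤ 2 * (t * (2 * (l.val : ℝ) + 1) ^ 2) := by
        have hsq : (n:ℝ)^2 ≤ (2 * (l.val : ℝ) + 1) ^ 2 := by nlinarith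
        have : x = 2 * (t * (n:ℝ)^2) := by
          rw [hxdef, hts]
          field_simp
        rw [this]
        nlinarith
      have h1x : (0:ℝ) < Real.sqrt (1 + x) := Real.sqrt_pos.mpr (by linarith)
      exact inv_anti₀ h1x (Real.sqrt_le_sqrt (by linarith))
    calc ∏ l ∈ Finset.Ici i₀, (Real.sqrt (1 + 2 * (t * (2 * (l.val : ℝ) + 1) ^ 2)))⁻¹
        ≤ ∏ l ∈ Finset.Ici i₀, (Real.sqrt (1 + x))⁻¹ :=
          Finset.prod_le_prod (fun l _ => by positivity) hstep
      _ = (Real.sqrt (1 + x))⁻¹ ^ k := by rw [Finset.prod_const, Fin.card_Ici]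
  refine hkey.trans ?_
  -- now the power bound
  have hmn : n ≤ 16 * m := by omega
  have hmx : s / 8 ≤ (m:ℝ) * x := by
    have h16 : (n:ℝ) ≤ 16 * m := by exact_mod_cast hmn
    rw [hxdef, mul_div_assoc', le_div_iff₀ hn0]
    nlinarith [mul_nonneg (sub_nonneg.mpr h16) hs.le]
  have hbase : 1 ≤ Real.sqrt (1 + x) := by
    nlinarith [Real.sq_sqrt (by linarith : (0:ℝ) ≤ 1 + x), Real.sqrt_nonneg (1 + x)]
  have h4m : 4 * m ≤ k := by omega
  have hpow : (s/8)^2 ≤ (Real.sqrt (1+x)) ^ k := by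
    calc (s/8)^2 ≤ ((m:ℝ) * x)^2 := pow_le_pow_left₀ (by positivity) hmx 2
    _ ≤ ((1+x)^m)^2 := by
        refine pow_le_pow_left₀ (by positivity) ?_ 2
        calc (m:ℝ)*x ≤ 1 + m*x := by linarith
        _ ≤ (1+x)^m := one_add_mul_le_pow (by linarith) m
    _ = (1+x)^(2*m) := by rw [← pow_mul, Nat.mul_comm]
    _ = (Real.sqrt (1+x))^(4*m) := by
        conv_rhs => rw [show (4*m) = 2*(2*m) from by ring, pow_mul,
          Real.sq_sqrt (by linarith : (0:ℝ) ≤ 1 + x)]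
    _ ≤ (Real.sqrt (1+x))^k := pow_le_pow_right₀ hbase h4m
  calc (Real.sqrt (1+x))⁻¹ ^ k = ((Real.sqrt (1+x))^k)⁻¹ := by rw [inv_pow]
  _ ≤ ((s/8)^2)⁻¹ := inv_anti₀ (by positivity) hpow
  _ = 64 / s^2 := by rw [div_pow, inv_div]; norm_num

noncomputable def domF (s : ℝ) : ℝ := min 1 (64 / s ^ 2)

lemma domF_nonneg (s : ℝ) : 0 ≤ domF s := by
  unfold domF
  rcases le_or_gt s 0 with h | h
  · refine le_min zero_le_one (by positivity)
  · refine le_min zero_le_one (by positivity)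

lemma domF_integrable : IntegrableOn domF (Set.Ioi (0:ℝ)) := by
  have hmeas : Measurable domF := by unfold domF; fun_prop
  have h1 : IntegrableOn domF (Set.Ioc (0:ℝ) 1) := by
    refine Integrable.mono' (integrable_const 1) hmeas.aestronglyMeasurable.restrict ?_
    refine Filter.Eventually.of_forall fun s => ?_
    rw [Real.norm_eq_abs, abs_of_nonneg (domF_nonneg s)]
    exact min_le_left _ _
  have h2 : IntegrableOn domF (Set.Ioi (1:ℝ)) := by
    have hr : IntegrableOn (fun s : ℝ => s ^ (-2:ℝ)) (Set.Ioi (1:ℝ)) :=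
      integrableOn_Ioi_rpow_of_lt (by norm_num) one_pos
    refine Integrable.mono' (hr.const_mul 64) hmeas.aestronglyMeasurable.restrict ?_
    rw [ae_restrict_iff' measurableSet_Ioi]
    refine Filter.Eventually.of_forall fun s hs => ?_
    have hs0 : (0:ℝ) < s := lt_trans one_pos hs
    rw [Real.norm_eq_abs, abs_of_nonneg (domF_nonneg s)]
    calc domF s ≤ 64 / s^2 := min_le_right _ _
    _ = 64 * s ^ (-2:ℝ) := by
        rw [show (-2:ℝ) = -((2:ℕ):ℝ) from by norm_num, Real.rpow_neg hs0.le,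
          Real.rpow_natCast, div_eq_mul_inv]
  have := h1.union h2
  rwa [Set.Ioc_union_Ioi_eq_Ioi zero_le_one] at this

lemma steinF_le_domF (n : ℕ) (hn : 16 ≤ n) {s : ℝ} (hs : 0 < s) :
    steinF n (((n : ℝ) ^ 3)⁻¹ * s) ≤ domF s :=
  le_min (steinF_le_one n (by positivity)) (steinF_bound n hn hs)

lemma tendsto_sum_log (s : ℝ) (hs : 0 < s) :
    Filter.Tendsto (fun n : ℕ => ∑ l : Fin n,
        Real.log (1 + 2 * ((((n:ℝ)^3)⁻¹ * s) * (2*(l.val:ℝ)+1)^2)))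
      Filter.atTop (nhds (8/3 * s)) := by
  set c : ℕ → ℕ → ℝ := fun n l => 2 * ((((n:ℝ)^3)⁻¹ * s) * (2*(l:ℝ)+1)^2) with hc
  have hc_nonneg : ∀ n l, 0 ≤ c n l := fun n l => by positivity
  set A : ℕ → ℝ := fun n => ∑ l : Fin n, c n l.val with hA
  have hAform : ∀ n : ℕ, 1 ≤ n → A n = 2*s/3 * ((2 - 1/(n:ℝ)) * (2 + 1/(n:ℝ))) := by
    intro n hn
    have hn0 : ((n:ℝ)) ≠ 0 := Nat.cast_ne_zero.mpr (by omega)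
    have hstep : A n = (2 * (((n:ℝ)^3)⁻¹ * s)) * ∑ l : Fin n, (2*(l.val:ℝ)+1)^2 := by
      rw [hA, Finset.mul_sum]
      exact Finset.sum_congr rfl fun l _ => by rw [hc]; ring
    rw [hstep, sum_sq_odd_fin]
    field_simp
  have h1n : Filter.Tendsto (fun n:ℕ => 1/(n:ℝ)) Filter.atTop (nhds 0) :=
    tendsto_one_div_atTop_nhds_zero_nat
  have hAt : Filter.Tendsto A Filter.atTop (nhds (8/3*s)) := by
    have hlim : Filter.Tendsto (fun n : ℕ => 2*s/3 * ((2 - 1/(n:ℝ)) * (2 + 1/(n:ℝ))))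
        Filter.atTop (nhds (2*s/3 * ((2-0)*(2+0)))) :=
      (((tendsto_const_nhds.sub h1n).mul (tendsto_const_nhds.add h1n)).const_mul _)
    rw [show 2*s/3*(((2:ℝ)-0)*(2+0)) = 8/3*s from by ring] at hlim
    refine hlim.congr' ?_
    filter_upwards [Filter.eventually_ge_atTop 1] with n hn
    exact (hAform n hn).symm
  have hupper : ∀ n : ℕ, (∑ l : Fin n, Real.log (1 + c n l.val)) ≤ A n := by
    intro n
    rw [hA]
    refine Finset.sum_le_sum fun l _ => ?_
    have h0 := hc_nonneg n l.val
    have h := Real.log_le_sub_one_of_pos (show (0:ℝ) < 1 + c n l.val by linarith)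
    linarith
  have hlower : ∀ n : ℕ, 1 ≤ n →
      A n * (1 - 8*s/(n:ℝ)) ≤ ∑ l : Fin n, Real.log (1 + c n l.val) := by
    intro n hn
    have hnR : (0:ℝ) < n := by exact_mod_cast hn
    have hcle : ∀ l : Fin n, c n l.val ≤ 8*s/(n:ℝ) := by
      intro l
      have h2l : (2*(l.val:ℝ)+1) ≤ 2*(n:ℝ) := by
        have : 2*l.val+1 ≤ 2*n := by omega
        exact_mod_cast this
      have hB : (2*(l.val:ℝ)+1)^2 ≤ 4*(n:ℝ)^2 := by nlinarith [l.val.cast_nonneg (α := ℝ)]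
      have heq : c n l.val = 2*s*(2*(l.val:ℝ)+1)^2/((n:ℝ)^3) := by rw [hc]; ring
      rw [heq, div_le_div_iff₀ (by positivity) hnR]
      nlinarith [hs.le, mul_nonneg hs.le (sq_nonneg ((n:ℝ)))]
    have hterm : ∀ l : Fin n, c n l.val * (1 - 8*s/(n:ℝ)) ≤ Real.log (1 + c n l.val) := by
      intro l
      have h0 : 0 ≤ c n l.val := hc_nonneg n l.val
      have h1 : (0:ℝ) < 1 + c n l.val := by linarith
      have hloginv := Real.log_le_sub_one_of_pos (inv_pos.mpr h1)
      rw [Real.log_inv] at hloginv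
      have h2 : c n l.val / (1 + c n l.val) ≤ Real.log (1 + c n l.val) := by
        have heq : (1:ℝ) - (1+c n l.val)⁻¹ = c n l.val / (1 + c n l.val) := by
          field_simp
          ring
        linarith
      have h3 : c n l.val - c n l.val^2 ≤ c n l.val / (1 + c n l.val) := by
        rw [le_div_iff₀ h1]
        nlinarith
      have h4 : c n l.val ^ 2 ≤ (8*s/(n:ℝ)) * c n l.val := by
        nlinarith [hcle l]
      nlinarith
    calc A n * (1 - 8*s/(n:ℝ)) = ∑ l : Fin n, c n l.val * (1 - 8*s/(n:ℝ)) := by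
          rw [hA, Finset.sum_mul]
    _ ≤ ∑ l : Fin n, Real.log (1 + c n l.val) := Finset.sum_le_sum fun l _ => hterm l
  have hlow : Filter.Tendsto (fun n : ℕ => A n * (1 - 8*s/(n:ℝ)))
      Filter.atTop (nhds (8/3*s)) := by
    have hq : Filter.Tendsto (fun n:ℕ => 1 - 8*s/(n:ℝ)) Filter.atTop (nhds (1 - 0)) := by
      refine tendsto_const_nhds.sub ?_
      have := h1n.const_mul (8*s)
      simp only [mul_zero] at this
      refine this.congr fun n => by ring
    have := hAt.mul hq
    rw [show (8/3*s) * (1-0) = 8/3*s from by ring] at this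
    exact this
  refine tendsto_of_tendsto_of_tendsto_of_le_of_le' hlow hAt ?_ ?_
  · filter_upwards [Filter.eventually_ge_atTop 1] with n hn
    exact hlower n hn
  · exact Filter.Eventually.of_forall fun n => hupper n

lemma tendsto_steinF_scaled (s : ℝ) (hs : 0 < s) :
    Filter.Tendsto (fun n : ℕ => steinF n (((n:ℝ)^3)⁻¹ * s)) Filter.atTop
      (nhds (rexp (-(4/3*s)))) := by
  have hrw : ∀ n : ℕ, steinF n (((n:ℝ)^3)⁻¹ * s)
      = rexp ((-(1/2)) * ∑ l : Fin n,
          Real.log (1 + 2 * ((((n:ℝ)^3)⁻¹ * s) * (2*(l.val:ℝ)+1)^2))) := by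
    intro n
    rw [Finset.mul_sum, Real.exp_sum, steinF]
    refine Finset.prod_congr rfl fun l _ => ?_
    have h1 : (0:ℝ) < 1 + 2 * ((((n:ℝ)^3)⁻¹ * s) * (2*(l.val:ℝ)+1)^2) := by positivity
    rw [Real.sqrt_eq_rpow, Real.rpow_def_of_pos h1, ← Real.exp_neg]
    ring_nf
  have hcomp := (Real.continuous_exp.tendsto (-(1/2) * (8/3*s))).comp
    ((tendsto_sum_log s hs).const_mul (-(1/2)))
  rw [show (-(1/2:ℝ)) * (8/3*s) = -(4/3*s) from by ring] at hcomp
  refine hcomp.congr fun n => ?_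
  exact (hrw n).symm

lemma tendsto_integral_scaled :
    Filter.Tendsto (fun n : ℕ => ∫ s in Set.Ioi (0:ℝ), steinF n (((n:ℝ)^3)⁻¹ * s))
      Filter.atTop (nhds (3/4)) := by
  have hlimint : (∫ s in Set.Ioi (0:ℝ), rexp (-(4/3*s))) = 3/4 := by
    rw [integral_exp_neg_mul_Ioi' (4/3) (by norm_num)]
    norm_num
  rw [← Filter.tendsto_add_atTop_iff_nat 16]
  rw [← hlimint]
  refine tendsto_integral_of_dominated_convergence domF ?_ ?_ ?_ ?_
  · intro k
    exact ((measurable_steinF (k+16)).comp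
      (measurable_id.const_mul _)).aestronglyMeasurable.restrict
  · exact domF_integrable
  · intro k
    rw [ae_restrict_iff' measurableSet_Ioi]
    refine Filter.Eventually.of_forall fun s hs => ?_
    have hs0 : (0:ℝ) < s := hs
    rw [Real.norm_eq_abs, abs_of_nonneg (steinF_nonneg _ _)]
    exact steinF_le_domF (k+16) (by omega) hs0
  · rw [ae_restrict_iff' measurableSet_Ioi]
    refine Filter.Eventually.of_forall fun s hs => ?_
    have hs0 : (0:ℝ) < s := hs
    exact (tendsto_steinF_scaled s hs0).comp (Filter.tendsto_add_atTop_nat 16)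


/-- Gain asymptotics: `G(n) ~ 6/(nπ²)` as `n → ∞`, i.e. `n·G(n) → 6/π²`. -/
theorem stein_gain_asymptotics :
    Filter.Tendsto (fun n : ℕ => (n : ℝ) * steinGain n) Filter.atTop
      (nhds (6 / π ^ 2)) := by
  have h2 : Filter.Tendsto (fun n:ℕ => 2/(n:ℝ)) Filter.atTop (nhds 0) := by
    have := tendsto_one_div_atTop_nhds_zero_nat.const_mul (2:ℝ)
    simp only [mul_zero] at this
    exact this.congr fun n => by ring
  have h1 : Filter.Tendsto (fun n : ℕ => ((1:ℝ) - 2/(n:ℝ))^2) Filter.atTop (nhds 1) := by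
    have := ((tendsto_const_nhds (x := (1:ℝ))).sub h2).pow 2
    norm_num at this
    exact this
  have hmain := h1.mul (tendsto_integral_scaled.const_mul (8/π^2))
  rw [show (1:ℝ) * (8/π^2 * (3/4)) = 6/π^2 from by ring] at hmain
  refine hmain.congr' ?_
  filter_upwards [Filter.eventually_ge_atTop 16] with n hn
  have hn1 : 1 ≤ n := by omega
  have hn0 : ((n:ℝ)) ≠ 0 := Nat.cast_ne_zero.mpr (by omega)
  have hcv : (∫ s in Set.Ioi (0:ℝ), steinF n (((n:ℝ)^3)⁻¹ * s))
      = ((n:ℝ)^3) * ∫ t in Set.Ioi (0:ℝ), steinF n t := by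
    have hb : (0:ℝ) < ((n:ℝ)^3)⁻¹ := by positivity
    have := integral_comp_mul_left_Ioi (steinF n) 0 hb
    simp only [mul_zero, inv_inv, smul_eq_mul] at this
    exact this
  rw [steinGain, repr_integral n hn1]
  rw [hcv]
  field_simp
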